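/- (Validity of LB1) Let C be an initial configuration of the BRP and let 𝔅¹ be the set of blocks that are badly placed in C. Then every feasible move sequence for C contains at least |𝔅¹| relocations; that is, f(Fin B) ≥ |𝔅¹|. -/

import Mathlib

/-- A configuration of the BRP: each stack holds a list of blocks, bottom to top. -/
abbrev Config (B S : ℕ) := Fin S → List (Fin B)

/-- Every block occurs exactly once among the stacks. -/
def IsConfig {B S : ℕ} (C : Config B S) : Prop :=
  ∀ b : Fin B, (∑ s : Fin S, (C s).count b) = 1

/-- `a` lies strictly below `b` in stack `s` of `C`. -/
def StrictlyBelow {B S : ℕ} (C : Config B S) (s : Fin S) (a b : Fin B) : Prop :=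
  ∃ i j : ℕ, i < j ∧ (C s)[i]? = some a ∧ (C s)[j]? = some b

/-- A block is badly placed if some smaller-labelled block lies below it in its stack. -/
def BadlyPlaced {B S : ℕ} (C : Config B S) (b : Fin B) : Prop :=
  ∃ s a, a < b ∧ StrictlyBelow C s a b

/-- Moves: retrieve the top block of a stack, or relocate the top block of one
stack onto another stack. -/
inductive Move (S : ℕ) where
  | retrieve (s : Fin S)
  | relocate (src dst : Fin S)

def applyMove {B S : ℕ} (C : Config B S) : Move S → Config B S
  | .retrieve s => Function.update C s (C s).dropLast
  | .relocate src dst =>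
    match (C src).getLast? with
    | some b =>
      let C' := Function.update C src (C src).dropLast
      Function.update C' dst (C' dst ++ [b])
    | none => C

def Enabled {B S : ℕ} (C : Config B S) : Move S → Prop
  | .retrieve s => ∃ b, (C s).getLast? = some b ∧ ∀ (s' : Fin S), ∀ b' ∈ C s', b ≤ b'
  | .relocate src dst => src ≠ dst ∧ C src ≠ []

def play {B S : ℕ} (C : Config B S) : List (Move S) → Config B S
  | [] => C
  | m :: ms => play (applyMove C m) ms

def AllEnabled {B S : ℕ} (C : Config B S) : List (Move S) → Prop
  | [] => True
  | m :: ms => Enabled C m ∧ AllEnabled (applyMove C m) ms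

/-- A feasible move sequence: every move is enabled and at the end all blocks
have been retrieved. -/
def Feasible {B S : ℕ} (C : Config B S) (ms : List (Move S)) : Prop :=
  AllEnabled C ms ∧ ∀ s, play C ms s = []

/-- `b` is the block moved by `m` (a relocation) performed in configuration `C`. -/
def MovedBlock {B S : ℕ} (C : Config B S) (m : Move S) (b : Fin B) : Prop :=
  ∃ src dst, m = .relocate src dst ∧ src ≠ dst ∧ (C src).getLast? = some b

/-- The four types of relocation moves. -/
inductive MType where
  | BB | BG | GB | GG

/-- The relocation `m`, moving block `b` from configuration `C`, has the given type. -/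
def MTypeOf {B S : ℕ} (C : Config B S) (m : Move S) (b : Fin B) : MType → Prop
  | .BB => BadlyPlaced C b ∧ BadlyPlaced (applyMove C m) b
  | .BG => BadlyPlaced C b ∧ ¬ BadlyPlaced (applyMove C m) b
  | .GB => ¬ BadlyPlaced C b ∧ BadlyPlaced (applyMove C m) b
  | .GG => ¬ BadlyPlaced C b ∧ ¬ BadlyPlaced (applyMove C m) b

/-- `m` is a relocation of a block of `𝔅`. -/
def RelocIn {B S : ℕ} (𝔅 : Set (Fin B)) (C : Config B S) (m : Move S) : Prop :=
  ∃ b ∈ 𝔅, MovedBlock C m b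

/-- `m` is a relocation of a block of `𝔅` of type `mt`. -/
def RelocTypeIn {B S : ℕ} (mt : MType) (𝔅 : Set (Fin B)) (C : Config B S) (m : Move S) : Prop :=
  ∃ b ∈ 𝔅, MovedBlock C m b ∧ MTypeOf C m b mt

/-- `m` is a non-BG relocation of a block of `𝔅`. -/
def RelocNonBGIn {B S : ℕ} (𝔅 : Set (Fin B)) (C : Config B S) (m : Move S) : Prop :=
  ∃ b ∈ 𝔅, MovedBlock C m b ∧ ¬ MTypeOf C m b MType.BG

/-- Count the moves of a sequence satisfying `P` (evaluated in the configuration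
in which each move is performed). -/
noncomputable def countMoves {B S : ℕ} (P : Config B S → Move S → Prop) :
    Config B S → List (Move S) → ℕ
  | _, [] => 0
  | C, m :: ms =>
    (@ite ℕ (P C m) (Classical.propDecidable _) 1 0) + countMoves P (applyMove C m) ms

/-- Minimum over feasible move sequences of the number of moves satisfying `P`. -/
noncomputable def fMin {B S : ℕ} (C : Config B S) (P : Config B S → Move S → Prop) : ℕ :=
  sInf { n | ∃ ms, Feasible C ms ∧ countMoves P C ms = n }

/-- `f(𝔅)`: least number of relocations applied to blocks of `𝔅`. -/
noncomputable def fRel {B S : ℕ} (C : Config B S) (𝔅 : Set (Fin B)) : ℕ :=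
  fMin C (RelocIn 𝔅)

/-- `f_mt(𝔅)`: least number of type-`mt` relocations applied to blocks of `𝔅`. -/
noncomputable def fTyp {B S : ℕ} (C : Config B S) (mt : MType) (𝔅 : Set (Fin B)) : ℕ :=
  fMin C (RelocTypeIn mt 𝔅)

/-- `f_nonBG(𝔅)`: least number of non-BG relocations applied to blocks of `𝔅`. -/
noncomputable def fNonBG {B S : ℕ} (C : Config B S) (𝔅 : Set (Fin B)) : ℕ :=
  fMin C (RelocNonBGIn 𝔅)

/-- The top 1st layer: the topmost block of each stack. -/
def TopLayer {B S : ℕ} (C : Config B S) : Set (Fin B) :=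
  {b | ∃ s, (C s).getLast? = some b}

/-- The top `k` layers: the topmost `k` blocks of every stack. -/
def TopK {B S : ℕ} (C : Config B S) (k : ℕ) : Set (Fin B) :=
  {b | ∃ s, b ∈ (C s).drop ((C s).length - k)}

/-- The top `j`-th layer: the `j`-th block from the top of every stack. -/
def TopJth {B S : ℕ} (C : Config B S) (j : ℕ) : Set (Fin B) :=
  {b | ∃ s, (C s)[(C s).length - j]? = some b}

/-- A virtual layer: a set of blocks containing exactly one block from each stack. -/
def VirtualLayer {B S : ℕ} (C : Config B S) (V : Set (Fin B)) : Prop :=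
  ∀ s : Fin S, ∃! b : Fin B, b ∈ V ∧ b ∈ C s

/-- `a` lies at or below the `V`-block of stack `s`. -/
def AtOrBelowLayer {B S : ℕ} (C : Config B S) (V : Set (Fin B)) (s : Fin S) (a : Fin B) : Prop :=
  ∃ b j, b ∈ V ∧ (C s)[j]? = some b ∧ a ∈ (C s).take (j + 1)

/-- `V` is a virtual layer satisfying the conditions of Property 5:
(1) in some stack, a block strictly below the `V`-block of that stack has a smaller
label than every block of `V`; (2) every badly placed block of `V` has a label
strictly greater than the minimum label present in stack `s` after deleting all
blocks strictly above the `V`-block of `s`, for every stack `s`. -/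
def P5 {B S : ℕ} (C : Config B S) (V : Set (Fin B)) : Prop :=
  VirtualLayer C V ∧
  (∃ s a b, b ∈ V ∧ StrictlyBelow C s a b ∧ ∀ c ∈ V, a < c) ∧
  (∀ b ∈ V, BadlyPlaced C b → ∀ s : Fin S, ∃ a, AtOrBelowLayer C V s a ∧ a < b)

/-- A pair of virtual layers `V₁` (upper), `V₂` (lower) with shared well-placed
block `bstar` satisfying the conditions of Property 7. -/
def P7 {B S : ℕ} (C : Config B S) (V₁ V₂ : Set (Fin B)) (bstar : Fin B) : Prop :=
  V₁ ∩ V₂ = {bstar} ∧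
  ¬ BadlyPlaced C bstar ∧
  (∀ s : Fin S, bstar ∉ C s →
    ∃ b₁ b₂, b₁ ∈ V₁ ∧ b₂ ∈ V₂ ∧ StrictlyBelow C s b₂ b₁) ∧
  P5 C V₁ ∧ P5 C V₂ ∧
  (∀ s : Fin S, ∃ a, AtOrBelowLayer C V₁ s a ∧ a ≤ bstar) ∧
  (∃ s : Fin S, ∀ a, AtOrBelowLayer C V₁ s a → bstar ≤ a)

/-- Push blocks one by one onto the indicated stacks. -/
def pushAll {B S : ℕ} (C : Config B S) : List (Fin B × Fin S) → Config B S
  | [] => C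
  | p :: rest => pushAll (Function.update C p.2 (C p.2 ++ [p.1])) rest

/-- The blocks lying strictly above position `i` of stack `s`, listed from the
top of the stack downward (the processing order of the experiment). -/
def aboveList {B S : ℕ} (C : Config B S) (s : Fin S) (i : ℕ) : List (Fin B) :=
  ((C s).drop (i + 1)).reverse

/-- The arrangement resulting from the experiment of Property 4: the blocks above
position `i` of stack `s` are relocated exactly once, from the top downward, onto
the stacks listed in `ds`. -/
def expResult {B S : ℕ} (C : Config B S) (s : Fin S) (i : ℕ) (ds : List (Fin S)) :
    Config B S :=
  pushAll (Function.update C s ((C s).take (i + 1))) ((aboveList C s i).zip ds)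

/-- The condition of Property 4 (target block at position `i` of stack `sStar`):
in every experiment, some relocated block ends badly placed. -/
def P4Cond {B S : ℕ} (C : Config B S) (sStar : Fin S) (i : ℕ) : Prop :=
  ∀ ds : List (Fin S), ds.length = (aboveList C sStar i).length →
    (∀ d ∈ ds, d ≠ sStar) →
    ∃ b ∈ aboveList C sStar i, BadlyPlaced (expResult C sStar i ds) b

/-- The set `𝔅⁴`: the blocks above the target block together with, for each
nonempty stack other than the target's stack, its block of minimum label. -/
def B4Set {B S : ℕ} (C : Config B S) (sStar : Fin S) (i : ℕ) : Set (Fin B) :=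
  {b | b ∈ aboveList C sStar i} ∪
  {b | ∃ s, s ≠ sStar ∧ b ∈ C s ∧ ∀ b' ∈ C s, b ≤ b'}

/-- The number of direct blockages: adjacent pairs in a stack whose upper block
has a strictly larger label. -/
def directBlockages {B S : ℕ} (C : Config B S) : ℕ :=
  ∑ s : Fin S, (((C s).zip (C s).tail).filter (fun p => decide (p.1 < p.2))).length

/-- The number of relocations in a move sequence. -/
def relocCount {S : ℕ} (ms : List (Move S)) : ℕ :=
  (ms.filter (fun m => match m with | Move.relocate _ _ => true | Move.retrieve _ => false)).length

/-- The minimum number of relocations over all feasible move sequences. -/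
noncomputable def fAll {B S : ℕ} (C : Config B S) : ℕ :=
  sInf { n | ∃ ms, Feasible C ms ∧ relocCount ms = n }

/-- `g(L)`: `L` plus the minimum number of direct blockages over all partial
plans with exactly `L` relocations. -/
noncomputable def gIter {B S : ℕ} (C : Config B S) (L : ℕ) : ℕ :=
  L + sInf { d | ∃ ms : List (Move S), AllEnabled C ms ∧ relocCount ms = L ∧
      d = directBlockages (play C ms) }

section LB1Aux

variable {B S : ℕ}

private lemma mem_of_getElem?' {l : List (Fin B)} {i : ℕ} {a : Fin B}
    (h : l[i]? = some a) : a ∈ l := by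
  obtain ⟨h', rfl⟩ := List.getElem?_eq_some_iff.mp h
  exact List.getElem_mem h'

/-- After an enabled retrieval, every badly placed block stays badly placed. -/
lemma bp_mono_retrieve (C : Config B S) (s : Fin S)
    (hEn : Enabled C (Move.retrieve s)) :
    {b | BadlyPlaced C b} ⊆ {b | BadlyPlaced (applyMove C (Move.retrieve s)) b} := by
  obtain ⟨r, hr, hmin⟩ := hEn
  rintro b ⟨t, a, hab, i, j, hij, hi, hj⟩
  have hC' : applyMove C (Move.retrieve s) = Function.update C s (C s).dropLast := rfl
  by_cases hts : t = s
  · subst hts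
    have hjlt : j < (C t).length := (List.getElem?_eq_some_iff.mp hj).1
    have hbr : j ≠ (C t).length - 1 := by
      intro he
      have hbr' : b = r := by
        rw [List.getLast?_eq_getElem?, ← he, hj] at hr
        exact Option.some_injective _ hr
      have hamem : a ∈ C t := mem_of_getElem?' hi
      have := hmin t a hamem
      rw [hbr'] at hab
      exact absurd hab (not_lt.mpr this)
    have hjlt' : j < (C t).length - 1 := lt_of_le_of_ne (Nat.le_pred_of_lt hjlt) hbr
    refine ⟨t, a, hab, i, j, hij, ?_, ?_⟩ <;>
      rw [hC', Function.update_self, List.dropLast_eq_take, List.getElem?_take]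
    · rw [if_pos (lt_trans hij hjlt')]; exact hi
    · rw [if_pos hjlt']; exact hj
  · exact ⟨t, a, hab, i, j, hij,
      by rw [hC', Function.update_of_ne hts]; exact hi,
      by rw [hC', Function.update_of_ne hts]; exact hj⟩

/-- After a relocation, every badly placed block other than the moved one stays
badly placed. -/
lemma bp_mono_relocate (C : Config B S) (src dst : Fin S) (hne : src ≠ dst)
    (hnnil : C src ≠ []) :
    {c | BadlyPlaced C c} ⊆
      insert ((C src).getLast hnnil)
        {c | BadlyPlaced (applyMove C (Move.relocate src dst)) c} := by
  set bb := (C src).getLast hnnil with hbb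
  have hlast : (C src).getLast? = some bb := List.getLast?_eq_getLast hnnil
  set D := Function.update C src (C src).dropLast with hD
  have hC' : applyMove C (Move.relocate src dst) =
      Function.update D dst (D dst ++ [bb]) := by
    simp only [applyMove, hlast]; rfl
  have hDdst : D dst = C dst := Function.update_of_ne (Ne.symm hne) _ _
  have hDsrc : D src = (C src).dropLast := Function.update_self _ _ _
  rintro c ⟨t, a, hab, i, j, hij, hi, hj⟩
  rcases eq_or_ne c bb with hcb | hcb
  · exact Set.mem_insert_iff.mpr (Or.inl hcb)
  refine Set.mem_insert_iff.mpr (Or.inr ?_)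
  by_cases htd : t = dst
  · subst htd
    have hjlt : j < (C t).length := (List.getElem?_eq_some_iff.mp hj).1
    refine ⟨t, a, hab, i, j, hij, ?_, ?_⟩ <;>
      rw [hC', Function.update_self, hDdst, List.getElem?_append]
    · rw [if_pos (lt_trans hij hjlt)]; exact hi
    · rw [if_pos hjlt]; exact hj
  · by_cases hts : t = src
    · subst hts
      have hjlt : j < (C t).length := (List.getElem?_eq_some_iff.mp hj).1
      have hbr : j ≠ (C t).length - 1 := by
        intro he
        apply hcb
        have := hlast
        rw [List.getLast?_eq_getElem?, ← he, hj] at this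
        exact Option.some_injective _ this
      have hjlt' : j < (C t).length - 1 := lt_of_le_of_ne (Nat.le_pred_of_lt hjlt) hbr
      refine ⟨t, a, hab, i, j, hij, ?_, ?_⟩ <;>
        rw [hC', Function.update_of_ne hne, hDsrc,
          List.dropLast_eq_take, List.getElem?_take]
      · rw [if_pos (lt_trans hij hjlt')]; exact hi
      · rw [if_pos hjlt']; exact hj
    · refine ⟨t, a, hab, i, j, hij, ?_, ?_⟩ <;>
        rw [hC', Function.update_of_ne htd, hD, Function.update_of_ne hts]
      · exact hi
      · exact hj

/-- The counting lemma: any feasible sequence uses at least `|𝔅¹|` relocations. -/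
lemma lb1_count : ∀ (ms : List (Move S)) (C : Config B S),
    AllEnabled C ms → (∀ s, play C ms s = []) →
    {b | BadlyPlaced C b}.ncard ≤
      countMoves (RelocIn (Set.univ : Set (Fin B))) C ms := by
  intro ms
  induction ms with
  | nil =>
    intro C _ hemp
    have hBP : {b | BadlyPlaced C b} = ∅ := by
      ext b
      simp only [Set.mem_setOf_eq, Set.mem_empty_iff_false, iff_false]
      rintro ⟨s, a, hab, i, j, hij, hi, hj⟩
      have hCs : C s = [] := hemp s
      rw [hCs] at hj
      simp at hj
    rw [hBP, Set.ncard_empty]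
    exact Nat.zero_le _
  | cons m ms ih =>
    intro C hAE hemp
    obtain ⟨hEn, hAE'⟩ := hAE
    have hcount : countMoves (RelocIn (Set.univ : Set (Fin B))) C (m :: ms) =
        (@ite ℕ (RelocIn (Set.univ : Set (Fin B)) C m) (Classical.propDecidable _) 1 0) +
          countMoves (RelocIn (Set.univ : Set (Fin B))) (applyMove C m) ms := rfl
    have ihres := ih (applyMove C m) hAE' hemp
    cases m with
    | retrieve s =>
      have hF : ¬ RelocIn (Set.univ : Set (Fin B)) C (Move.retrieve s) := by
        rintro ⟨b, -, src, dst, heq, -, -⟩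
        exact nomatch heq
      rw [hcount, if_neg hF, zero_add]
      exact le_trans
        (Set.ncard_le_ncard (bp_mono_retrieve C s hEn) (Set.toFinite _)) ihres
    | relocate src dst =>
      obtain ⟨hnesd, hnnil⟩ := hEn
      have hT : RelocIn (Set.univ : Set (Fin B)) C (Move.relocate src dst) :=
        ⟨(C src).getLast hnnil, Set.mem_univ _, src, dst, rfl, hnesd,
          List.getLast?_eq_getLast hnnil⟩
      rw [hcount, if_pos hT]
      have h1 := Set.ncard_le_ncard (bp_mono_relocate C src dst hnesd hnnil)
        (Set.toFinite _)
      have h2 := Set.ncard_insert_le ((C src).getLast hnnil)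
        {c | BadlyPlaced (applyMove C (Move.relocate src dst)) c}
      omega

/-- Total number of blocks in a configuration. -/
def totalBlocks (C : Config B S) : ℕ := ∑ s, (C s).length

/-- The set of blocks present in a configuration. -/
def presentBlocks (C : Config B S) : Finset (Fin B) :=
  Finset.univ.filter (fun b => ∃ s, b ∈ C s)

/-- Auxiliary measure: distance from the top of the minimal block in an
optimally chosen stack. -/
noncomputable def kval (C : Config B S) : ℕ :=
  sInf { j | ∃ (h : (presentBlocks C).Nonempty) (s : Fin S),
      (presentBlocks C).min' h ∈ C s ∧
        ((C s).reverse).idxOf ((presentBlocks C).min' h) = j }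

/-- The measure used to show that a feasible sequence always exists. -/
noncomputable def muC (C : Config B S) : ℕ := (totalBlocks C) ^ 2 + kval C

lemma length_le_totalBlocks (C : Config B S) (s : Fin S) :
    (C s).length ≤ totalBlocks C := by
  show (C s).length ≤ ∑ t, (C t).length
  exact Finset.single_le_sum (f := fun t => (C t).length) (fun _ _ => Nat.zero_le _)
    (Finset.mem_univ s)

lemma kval_le_total (C : Config B S) : kval C ≤ totalBlocks C := by
  rcases Set.eq_empty_or_nonempty { j | ∃ (h : (presentBlocks C).Nonempty) (s : Fin S),
      (presentBlocks C).min' h ∈ C s ∧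
        ((C s).reverse).idxOf ((presentBlocks C).min' h) = j } with he | ⟨j, hj⟩
  · rw [kval, he, Nat.sInf_empty]; exact Nat.zero_le _
  · obtain ⟨h, s, hm, hidx⟩ := hj
    have h1 : j < (C s).reverse.length := by
      rw [← hidx]
      exact List.idxOf_lt_length_iff.mpr (List.mem_reverse.mpr hm)
    rw [List.length_reverse] at h1
    exact le_trans (Nat.sInf_le ⟨h, s, hm, hidx⟩)
      (le_trans (le_of_lt h1) (length_le_totalBlocks C s))

lemma totalBlocks_update (C : Config B S) (s : Fin S) (l : List (Fin B)) :
    totalBlocks (Function.update C s l) + (C s).length = totalBlocks C + l.length := by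
  have key : ∀ x : Fin S, (Function.update C s l x).length =
      Function.update (fun x => (C x).length) s l.length x := fun x =>
    Function.apply_update (fun _ t => List.length t) C s l x
  have h1 : totalBlocks (Function.update C s l) =
      l.length + ∑ x ∈ Finset.univ \ {s}, (C x).length := by
    rw [totalBlocks]
    rw [Finset.sum_congr rfl (fun x _ => key x)]
    exact Finset.sum_update_of_mem (Finset.mem_univ s) _ _
  have h2 : (C s).length + ∑ x ∈ (Finset.univ : Finset (Fin S)).erase s, (C x).length
      = totalBlocks C := by
    show _ = ∑ t, (C t).length
    exact Finset.add_sum_erase _ (fun t => (C t).length) (Finset.mem_univ s)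
  rw [Finset.sdiff_singleton_eq_erase] at h1
  omega

lemma exists_feasible (hS : 2 ≤ S) (C : Config B S) : ∃ ms, Feasible C ms := by
  generalize hmu : muC C = n
  induction n using Nat.strong_induction_on generalizing C with
  | _ n ih =>
  by_cases h0 : totalBlocks C = 0
  · refine ⟨[], trivial, fun s => ?_⟩
    have : (C s).length = 0 := by
      have := Finset.sum_eq_zero_iff.mp h0 s (Finset.mem_univ s)
      exact this
    exact List.length_eq_zero_iff.mp this
  · -- there is a nonempty stack, hence a minimal present block
    have hne : (presentBlocks C).Nonempty := by
      have : ∃ s : Fin S, (C s).length ≠ 0 := by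
        by_contra hc
        push_neg at hc
        exact h0 (Finset.sum_eq_zero (fun s _ => hc s))
      obtain ⟨s, hs⟩ := this
      have hsne : C s ≠ [] := fun h => hs (by rw [h]; rfl)
      exact ⟨(C s).head hsne, Finset.mem_filter.mpr
        ⟨Finset.mem_univ _, ⟨s, List.head_mem hsne⟩⟩⟩
    set m := (presentBlocks C).min' hne with hm
    have hmmem : m ∈ presentBlocks C := Finset.min'_mem _ _
    obtain ⟨s0, hs0⟩ : ∃ s, m ∈ C s := (Finset.mem_filter.mp hmmem).2
    have hsetne : { j | ∃ (h : (presentBlocks C).Nonempty) (s : Fin S),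
        (presentBlocks C).min' h ∈ C s ∧
          ((C s).reverse).idxOf ((presentBlocks C).min' h) = j }.Nonempty :=
      ⟨_, hne, s0, hs0, rfl⟩
    obtain ⟨h', s, hms, hidx⟩ := Nat.sInf_mem hsetne
    have hidx' : ((C s).reverse).idxOf m = kval C := hidx
    have hms' : m ∈ C s := hms
    have hCs : C s ≠ [] := fun hnil => by rw [hnil] at hms'; exact absurd hms' List.not_mem_nil
    have hmin : ∀ (s' : Fin S), ∀ b' ∈ C s', m ≤ b' := fun s' b' hb' =>
      Finset.min'_le _ _ (Finset.mem_filter.mpr ⟨Finset.mem_univ _, ⟨s', hb'⟩⟩)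
    rcases Nat.eq_zero_or_pos (kval C) with hk0 | hkpos
    · -- retrieve from stack s
      have hmem_rev : m ∈ (C s).reverse := List.mem_reverse.mpr hms'
      have hlt : List.idxOf m (C s).reverse < (C s).reverse.length :=
        List.idxOf_lt_length_iff.mpr hmem_rev
      have hget := List.getElem_idxOf hlt
      rw [hk0] at hidx'
      have h0lt : 0 < (C s).reverse.length := by omega
      have hgetlast : (C s).getLast? = some m := by
        rw [← List.head?_reverse, List.head?_eq_getElem?, List.getElem?_eq_getElem h0lt]
        congr 1
        rw [← hget]
        congr 1
        omega
      have hEn : Enabled C (Move.retrieve s) := ⟨m, hgetlast, hmin⟩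
      set C' := applyMove C (Move.retrieve s) with hC'
      have hC'eq : C' = Function.update C s (C s).dropLast := rfl
      have htot : totalBlocks C' + 1 = totalBlocks C := by
        have := totalBlocks_update C s (C s).dropLast
        rw [← hC'eq] at this
        have hlen : 0 < (C s).length := List.length_pos_iff.mpr hCs
        rw [List.length_dropLast] at this
        omega
      have hmu' : muC C' < n := by
        rw [← hmu]
        have hk' := kval_le_total C'
        have h1 : muC C' ≤ totalBlocks C' ^ 2 + totalBlocks C' :=
          Nat.add_le_add_left hk' _
        have h2 : totalBlocks C' ^ 2 + totalBlocks C' < totalBlocks C ^ 2 := by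
          rw [← htot]
          have : (totalBlocks C' + 1) ^ 2 = totalBlocks C' ^ 2 + 2 * totalBlocks C' + 1 := by
            ring
          rw [this]
          omega
        have h3 : totalBlocks C ^ 2 ≤ muC C := Nat.le_add_right _ _
        omega
      obtain ⟨ms, hAE, hpl⟩ := ih (muC C') hmu' C' rfl
      exact ⟨Move.retrieve s :: ms, ⟨hEn, hAE⟩, hpl⟩
    · -- relocate the top of stack s elsewhere
      obtain ⟨j, hkj⟩ : ∃ j, kval C = j + 1 := ⟨kval C - 1, by omega⟩
      have hj1 : List.idxOf m (C s).reverse = j + 1 := by rw [hidx', hkj]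
      set bb := (C s).getLast hCs with hbb
      have hlast : (C s).getLast? = some bb := List.getLast?_eq_getLast hCs
      have hrev : (C s).reverse = bb :: (C s).dropLast.reverse := by
        conv_lhs => rw [← List.dropLast_append_getLast hCs]
        rw [List.reverse_append, List.reverse_singleton]
        rfl
      have hbbne : bb ≠ m := by
        intro he
        rw [hrev, he, List.idxOf_cons_self] at hj1
        omega
      have hj' : List.idxOf m ((C s).dropLast.reverse) = j := by
        rw [hrev, List.idxOf_cons_ne _ hbbne] at hj1
        omega
      have hjlt : j < (C s).dropLast.reverse.length := by
        have h1 : List.idxOf m (C s).reverse < (C s).reverse.length :=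
          List.idxOf_lt_length_iff.mpr (List.mem_reverse.mpr hms')
        rw [hj1, hrev] at h1
        simp only [List.length_cons] at h1
        omega
      have hmemdl : m ∈ (C s).dropLast := by
        rw [← List.mem_reverse]
        exact List.idxOf_lt_length_iff.mp (by rw [hj']; exact hjlt)
      obtain ⟨dst, hdst⟩ := Fintype.exists_ne_of_one_lt_card
        (by rw [Fintype.card_fin]; omega) s
      have hsd : s ≠ dst := (Ne.symm hdst)
      have hEn : Enabled C (Move.relocate s dst) := ⟨hsd, hCs⟩
      set D := Function.update C s (C s).dropLast with hD
      set C' := applyMove C (Move.relocate s dst) with hC'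
      have hC'eq : C' = Function.update D dst (D dst ++ [bb]) := by
        rw [hC']
        simp only [applyMove, hlast]; rfl
      have hDdst : D dst = C dst := Function.update_of_ne (Ne.symm hsd) _ _
      have hDsrc : D s = (C s).dropLast := Function.update_self _ _ _
      have hC's : C' s = (C s).dropLast := by
        rw [hC'eq, Function.update_of_ne hsd, hDsrc]
      have hC'dst : C' dst = C dst ++ [bb] := by
        rw [hC'eq, Function.update_self, hDdst]
      have hC'o : ∀ t, t ≠ s → t ≠ dst → C' t = C t := fun t hts htd => by
        rw [hC'eq, Function.update_of_ne htd, hD, Function.update_of_ne hts]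
      -- present blocks are unchanged
      have hpres : presentBlocks C' = presentBlocks C := by
        ext x
        simp only [presentBlocks, Finset.mem_filter, Finset.mem_univ, true_and]
        constructor
        · rintro ⟨t, hx⟩
          rcases eq_or_ne t dst with rfl | htd
          · rw [hC'dst] at hx
            rcases List.mem_append.mp hx with h | h
            · exact ⟨t, h⟩
            · have : x = bb := List.mem_singleton.mp h
              exact ⟨s, this ▸ List.getLast_mem hCs⟩
          · rcases eq_or_ne t s with rfl | hts
            · rw [hC's] at hx
              exact ⟨t, List.dropLast_subset _ hx⟩
            · rw [hC'o t hts htd] at hx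
              exact ⟨t, hx⟩
        · rintro ⟨t, hx⟩
          rcases eq_or_ne t s with rfl | hts
          · conv at hx => rw [← List.dropLast_append_getLast hCs]
            rcases List.mem_append.mp hx with h | h
            · exact ⟨t, by rw [hC's]; exact h⟩
            · have : x = bb := List.mem_singleton.mp h
              refine ⟨dst, ?_⟩
              rw [hC'dst]
              exact List.mem_append.mpr (Or.inr (this ▸ List.mem_singleton_self _))
          · rcases eq_or_ne t dst with rfl | htd
            · exact ⟨t, by rw [hC'dst]; exact List.mem_append.mpr (Or.inl hx)⟩
            · exact ⟨t, by rw [hC'o t hts htd]; exact hx⟩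
      have hne' : (presentBlocks C').Nonempty := ⟨m, by rw [hpres]; exact hmmem⟩
      have hmin' : (presentBlocks C').min' hne' = m := by
        refine le_antisymm (Finset.min'_le _ _ (by rw [hpres]; exact hmmem)) ?_
        refine Finset.le_min' _ _ _ (fun y hy => ?_)
        rw [hpres] at hy
        exact Finset.min'_le _ _ hy
      -- kval decreases
      have hkC' : kval C' ≤ j := by
        refine Nat.sInf_le ⟨hne', s, ?_, ?_⟩
        · rw [hmin', hC's]; exact hmemdl
        · rw [hmin', hC's]; exact hj'
      -- total is unchanged
      have htot : totalBlocks C' = totalBlocks C := by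
        have h1 := totalBlocks_update C s (C s).dropLast
        rw [← hD] at h1
        have h2 := totalBlocks_update D dst (D dst ++ [bb])
        rw [← hC'eq] at h2
        have hlen : 0 < (C s).length := List.length_pos_iff.mpr hCs
        rw [List.length_dropLast] at h1
        rw [List.length_append, List.length_singleton] at h2
        omega
      have hmu' : muC C' < n := by
        rw [← hmu, muC, muC, htot, hkj]
        omega
      obtain ⟨ms, hAE, hpl⟩ := ih (muC C') hmu' C' rfl
      exact ⟨Move.relocate s dst :: ms, ⟨hEn, hAE⟩, hpl⟩

end LB1Aux

/-- validity of LB1: every feasible move sequence contains at least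
`|𝔅¹|` relocations, where `𝔅¹` is the set of badly placed blocks of `C`; that is,
`f(Fin B) ≥ |𝔅¹|`. -/
theorem brp_LB1 {B S : ℕ} (hS : 2 ≤ S) (hB : 1 ≤ B)
    (C : Config B S) (hC : IsConfig C) :
    (∀ ms, Feasible C ms →
      {b | BadlyPlaced C b}.ncard ≤ countMoves (RelocIn (Set.univ : Set (Fin B))) C ms) ∧
    {b | BadlyPlaced C b}.ncard ≤ fRel C Set.univ := by
  have main : ∀ ms, Feasible C ms →
      {b | BadlyPlaced C b}.ncard ≤ countMoves (RelocIn (Set.univ : Set (Fin B))) C ms :=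
    fun ms hms => lb1_count ms C hms.1 hms.2
  refine ⟨main, ?_⟩
  have hne : { n | ∃ ms, Feasible C ms ∧
      countMoves (RelocIn (Set.univ : Set (Fin B))) C ms = n }.Nonempty := by
    obtain ⟨ms, hms⟩ := exists_feasible hS C
    exact ⟨_, ms, hms, rfl⟩
  obtain ⟨ms, hms, hcnt⟩ := Nat.sInf_mem hne
  rw [fRel, fMin]
  exact hcnt ▸ main ms hms
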